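/- Let μ_0^{I,N} = (1/N) Σ_{i=1}^N 1_A(X^i) ξ_i δ_{X^i}, where X^1,...,X^N are i.i.d. T^2-valued random variables with density g bounded above by δ_2, ξ_1,...,ξ_N are i.i.d. Bernoulli(p) independent of the X^i, and A ⊆ T^2 is Borel. Let μ_0^I(dx) = p·1_A(x)·g(x)dx and V_0^N = √N(μ_0^{I,N} − μ_0^I), viewed as an element of the Sobolev space H^{−s}(T^2). Then for any s > 1, sup_{N≥1} E(||V_0^N||²_{H^{−s}}) ≤ p·δ_2·C(s) for a constant C(s) depending only on s. -/

import Mathlib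

open MeasureTheory Real

noncomputable section

/-- The two-dimensional torus `T² = ℝ²/ℤ²`. -/
abbrev T2 := AddCircle (1 : ℝ) × AddCircle (1 : ℝ)

instance : Fact ((0 : ℝ) < 1) := ⟨one_pos⟩

/-- `cc m x = cos(2πmx)` on the circle `ℝ/ℤ`. -/
def cc (m : ℕ) (x : AddCircle (1 : ℝ)) : ℝ := (fourier (m : ℤ) x).re

/-- `ss m x = sin(2πmx)` on the circle `ℝ/ℤ`. -/
def ss (m : ℕ) (x : AddCircle (1 : ℝ)) : ℝ := (fourier (m : ℤ) x).im

/-- Index set of the trigonometric basis of `L²(T²)`.  A positive even frequency `n` is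
written `n = 2m` with `m : ℕ+`; `const` is the constant function `1`; `hcos m, hsin m`
are the families `√2·cos(πn₁x₁), √2·sin(πn₁x₁)` (families 5,6); `vcos m, vsin m` the
families `√2·cos(πn₂x₂), √2·sin(πn₂x₂)` (families 7,8); and `sc, s2, c2, cs` the interior
families `2·sin·cos, 2·sin·sin, 2·cos·cos, 2·cos·sin` (families 1–4). -/
inductive Idx where
  | const : Idx
  | hcos : ℕ+ → Idx
  | hsin : ℕ+ → Idx
  | vcos : ℕ+ → Idx
  | vsin : ℕ+ → Idx
  | sc : ℕ+ → ℕ+ → Idx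
  | s2 : ℕ+ → ℕ+ → Idx
  | c2 : ℕ+ → ℕ+ → Idx
  | cs : ℕ+ → ℕ+ → Idx

/-- The quantity `n₁² + n₂²` for the basis function indexed by `j` (with `n = 2m`). -/
def lam : Idx → ℝ
  | .const => 0
  | .hcos m => (2 * (m : ℕ) : ℝ) ^ 2
  | .hsin m => (2 * (m : ℕ) : ℝ) ^ 2
  | .vcos m => (2 * (m : ℕ) : ℝ) ^ 2
  | .vsin m => (2 * (m : ℕ) : ℝ) ^ 2
  | .sc m₁ m₂ => (2 * (m₁ : ℕ) : ℝ) ^ 2 + (2 * (m₂ : ℕ) : ℝ) ^ 2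
  | .s2 m₁ m₂ => (2 * (m₁ : ℕ) : ℝ) ^ 2 + (2 * (m₂ : ℕ) : ℝ) ^ 2
  | .c2 m₁ m₂ => (2 * (m₁ : ℕ) : ℝ) ^ 2 + (2 * (m₂ : ℕ) : ℝ) ^ 2
  | .cs m₁ m₂ => (2 * (m₁ : ℕ) : ℝ) ^ 2 + (2 * (m₂ : ℕ) : ℝ) ^ 2

/-- The trigonometric orthonormal basis functions `f^i_{n₁,n₂}` of `L²(T²)`:
e.g. `f^1_{n₁,n₂}(x) = 2 sin(πn₁x₁) cos(πn₂x₂)` with `n₁ = 2m₁, n₂ = 2m₂` even. -/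
def bf : Idx → T2 → ℝ
  | .const => fun _ => 1
  | .hcos m => fun x => Real.sqrt 2 * cc m x.1
  | .hsin m => fun x => Real.sqrt 2 * ss m x.1
  | .vcos m => fun x => Real.sqrt 2 * cc m x.2
  | .vsin m => fun x => Real.sqrt 2 * ss m x.2
  | .sc m₁ m₂ => fun x => 2 * ss m₁ x.1 * cc m₂ x.2
  | .s2 m₁ m₂ => fun x => 2 * ss m₁ x.1 * ss m₂ x.2
  | .c2 m₁ m₂ => fun x => 2 * cc m₁ x.1 * cc m₂ x.2
  | .cs m₁ m₂ => fun x => 2 * cc m₁ x.1 * ss m₂ x.2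


/-- The Bernoulli(p) law on `ℝ`: mass `p` at `1` and `1−p` at `0`. -/
def bern (p : ℝ) : Measure ℝ :=
  ENNReal.ofReal p • Measure.dirac 1 + ENNReal.ofReal (1 - p) • Measure.dirac 0

/-- The orthonormal basis `ρ^{i,s}_{n₁,n₂} = f^i_{n₁,n₂}/(1+γπ²(n₁²+n₂²))^{s/2}`
of `H^s(T²)`. -/
def rho (γ s : ℝ) (j : Idx) (x : T2) : ℝ := bf j x / (1 + γ * π ^ 2 * lam j) ^ (s / 2)

lemma abs_cc_le (m : ℕ) (x : AddCircle (1:ℝ)) : |cc m x| ≤ 1 := by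
  have h : ‖fourier (m : ℤ) x‖ = 1 := Circle.norm_coe _
  calc |cc m x| ≤ ‖fourier (m:ℤ) x‖ := Complex.abs_re_le_norm _
  _ = 1 := h

lemma abs_ss_le (m : ℕ) (x : AddCircle (1:ℝ)) : |ss m x| ≤ 1 := by
  have h : ‖fourier (m : ℤ) x‖ = 1 := Circle.norm_coe _
  calc |ss m x| ≤ ‖fourier (m:ℤ) x‖ := Complex.abs_im_le_norm _
  _ = 1 := h

lemma cont_cc (m : ℕ) : Continuous (cc m) := Complex.continuous_re.comp (map_continuous _)
lemma cont_ss (m : ℕ) : Continuous (ss m) := Complex.continuous_im.comp (map_continuous _)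

lemma sqrt2_le_two : Real.sqrt 2 ≤ 2 := by
  nlinarith [Real.sq_sqrt (show (0:ℝ) ≤ 2 by norm_num), Real.sqrt_nonneg 2]

lemma abs_bf_le (j : Idx) (x : T2) : |bf j x| ≤ 2 := by
  have h2 : (0:ℝ) ≤ Real.sqrt 2 := Real.sqrt_nonneg 2
  cases j with
  | const => simp [bf]
  | hcos m => simpa [bf, abs_mul, abs_of_nonneg h2] using
      mul_le_mul sqrt2_le_two (abs_cc_le m x.1) (abs_nonneg _) (by norm_num) |>.trans (by norm_num)
  | hsin m => simpa [bf, abs_mul, abs_of_nonneg h2] using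
      mul_le_mul sqrt2_le_two (abs_ss_le m x.1) (abs_nonneg _) (by norm_num) |>.trans (by norm_num)
  | vcos m => simpa [bf, abs_mul, abs_of_nonneg h2] using
      mul_le_mul sqrt2_le_two (abs_cc_le m x.2) (abs_nonneg _) (by norm_num) |>.trans (by norm_num)
  | vsin m => simpa [bf, abs_mul, abs_of_nonneg h2] using
      mul_le_mul sqrt2_le_two (abs_ss_le m x.2) (abs_nonneg _) (by norm_num) |>.trans (by norm_num)
  | sc m₁ m₂ =>
      have := mul_le_mul (abs_ss_le m₁ x.1) (abs_cc_le m₂ x.2) (abs_nonneg _) (by norm_num)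
      calc |bf (.sc m₁ m₂) x| = 2 * (|ss m₁ x.1| * |cc m₂ x.2|) := by
            simp [bf, abs_mul, mul_assoc]
        _ ≤ 2 * 1 := by nlinarith
        _ = 2 := by norm_num
  | s2 m₁ m₂ =>
      have := mul_le_mul (abs_ss_le m₁ x.1) (abs_ss_le m₂ x.2) (abs_nonneg _) (by norm_num)
      calc |bf (.s2 m₁ m₂) x| = 2 * (|ss m₁ x.1| * |ss m₂ x.2|) := by
            simp [bf, abs_mul, mul_assoc]
        _ ≤ 2 * 1 := by nlinarith
        _ = 2 := by norm_num
  | c2 m₁ m₂ =>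
      have := mul_le_mul (abs_cc_le m₁ x.1) (abs_cc_le m₂ x.2) (abs_nonneg _) (by norm_num)
      calc |bf (.c2 m₁ m₂) x| = 2 * (|cc m₁ x.1| * |cc m₂ x.2|) := by
            simp [bf, abs_mul, mul_assoc]
        _ ≤ 2 * 1 := by nlinarith
        _ = 2 := by norm_num
  | cs m₁ m₂ =>
      have := mul_le_mul (abs_cc_le m₁ x.1) (abs_ss_le m₂ x.2) (abs_nonneg _) (by norm_num)
      calc |bf (.cs m₁ m₂) x| = 2 * (|cc m₁ x.1| * |ss m₂ x.2|) := by
            simp [bf, abs_mul, mul_assoc]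
        _ ≤ 2 * 1 := by nlinarith
        _ = 2 := by norm_num

lemma contT1 {f : AddCircle (1:ℝ) → ℝ} (hf : Continuous f) :
    Continuous (fun x : T2 => f x.1) := hf.comp continuous_fst
lemma contT2 {f : AddCircle (1:ℝ) → ℝ} (hf : Continuous f) :
    Continuous (fun x : T2 => f x.2) := hf.comp continuous_snd

lemma cont_bf (j : Idx) : Continuous (bf j) := by
  cases j with
  | const => exact continuous_const
  | hcos m => exact continuous_const.mul (contT1 (cont_cc m))
  | hsin m => exact continuous_const.mul (contT1 (cont_ss m))
  | vcos m => exact continuous_const.mul (contT2 (cont_cc m))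
  | vsin m => exact continuous_const.mul (contT2 (cont_ss m))
  | sc m₁ m₂ => exact (continuous_const.mul (contT1 (cont_ss m₁))).mul (contT2 (cont_cc m₂))
  | s2 m₁ m₂ => exact (continuous_const.mul (contT1 (cont_ss m₁))).mul (contT2 (cont_ss m₂))
  | c2 m₁ m₂ => exact (continuous_const.mul (contT1 (cont_cc m₁))).mul (contT2 (cont_cc m₂))
  | cs m₁ m₂ => exact (continuous_const.mul (contT1 (cont_cc m₁))).mul (contT2 (cont_ss m₂))
lemma lam_nonneg (j : Idx) : 0 ≤ lam j := by
  cases j <;> simp [lam] <;> positivity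

lemma base_one_le {γ : ℝ} (hγ : 0 < γ) (j : Idx) : 1 ≤ 1 + γ * π ^ 2 * lam j := by
  have h := mul_nonneg (mul_nonneg hγ.le (sq_nonneg π)) (lam_nonneg j)
  linarith

lemma denom_one_le {γ s : ℝ} (hγ : 0 < γ) (hs : 0 ≤ s) (j : Idx) :
    1 ≤ (1 + γ * π ^ 2 * lam j) ^ (s / 2) :=
  Real.one_le_rpow (base_one_le hγ j) (by linarith)

lemma abs_rho_le {γ s : ℝ} (hγ : 0 < γ) (hs : 0 ≤ s) (j : Idx) (x : T2) :
    |rho γ s j x| ≤ 2 := by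
  have h1 := denom_one_le hγ hs j
  have h0 : (0:ℝ) < (1 + γ * π ^ 2 * lam j) ^ (s / 2) := by linarith
  rw [rho, abs_div, abs_of_pos h0, div_le_iff₀ h0]
  calc |bf j x| ≤ 2 := abs_bf_le j x
  _ ≤ 2 * (1 + γ * π ^ 2 * lam j) ^ (s / 2) := by nlinarith

lemma rho_sq_le {γ s : ℝ} (hγ : 0 < γ) (hs : 0 ≤ s) (j : Idx) (x : T2) :
    (rho γ s j x) ^ 2 ≤ 4 * (1 + γ * π ^ 2 * lam j) ^ (-s) := by
  set b := 1 + γ * π ^ 2 * lam j with hb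
  have hb1 : 1 ≤ b := base_one_le hγ j
  have hb0 : 0 < b := by linarith
  have hd0 : (0:ℝ) < b ^ (s / 2) := Real.rpow_pos_of_pos hb0 _
  have hsq : (b ^ (s / 2)) ^ 2 = b ^ s := by
    rw [← Real.rpow_natCast (b ^ (s/2)) 2, ← Real.rpow_mul hb0.le]
    norm_num
  have hbf : (bf j x) ^ 2 ≤ 4 := by
    have := abs_bf_le j x
    nlinarith [abs_nonneg (bf j x), sq_abs (bf j x)]
  have hbs0 : (0:ℝ) < b ^ s := Real.rpow_pos_of_pos hb0 _
  rw [rho, div_pow, hsq, div_le_iff₀ hbs0, Real.rpow_neg hb0.le]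
  calc (bf j x) ^ 2 ≤ 4 := hbf
  _ = 4 * ((b ^ s)⁻¹ * b ^ s) := by field_simp
  _ = 4 * (b ^ s)⁻¹ * b ^ s := by ring

lemma meas_rho (γ s : ℝ) (j : Idx) : Measurable (rho γ s j) :=
  ((cont_bf j).measurable).div_const _

/-- summability of the dominating sequence on ℕ -/
lemma summable_h {c s : ℝ} (hc : 0 < c) (hs : 1 < s) :
    Summable (fun a : ℕ => 2 * (1 + c * (2 * (a:ℝ)) ^ 2) ^ (-(s / 2))) := by
  rw [← summable_nat_add_iff 1]
  have base : Summable (fun n : ℕ => ((n:ℝ)) ^ (-s)) :=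
    Real.summable_nat_rpow.2 (by linarith)
  have shifted : Summable (fun n : ℕ => (((n + 1 : ℕ)):ℝ) ^ (-s)) :=
    (summable_nat_add_iff 1).2 base
  have hsum := shifted.mul_left (2 * ((4 * c) ^ (-(s/2))))
  apply Summable.of_nonneg_of_le (fun n => by positivity) _ hsum
  intro n
  set a : ℝ := ((n + 1 : ℕ) : ℝ) with ha
  have ha1 : (1:ℝ) ≤ a := by rw [ha]; exact_mod_cast Nat.one_le_iff_ne_zero.2 (Nat.succ_ne_zero n)
  have ha0 : (0:ℝ) < a := by linarith
  have h1 : (0:ℝ) < 4 * c * a ^ 2 := by positivity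
  have h2 : 4 * c * a ^ 2 ≤ 1 + c * (2 * a) ^ 2 := by nlinarith
  have h3 : (1 + c * (2 * a) ^ 2) ^ (-(s/2)) ≤ (4 * c * a ^ 2) ^ (-(s/2)) :=
    Real.rpow_le_rpow_of_nonpos h1 h2 (by linarith)
  have h4 : (4 * c * a ^ 2) ^ (-(s/2)) = (4 * c) ^ (-(s/2)) * a ^ (-s) := by
    rw [show (4 * c * a ^ 2) = (4*c) * a^2 by ring,
      Real.mul_rpow (by positivity) (by positivity)]
    congr 1
    rw [← Real.rpow_natCast a 2, ← Real.rpow_mul ha0.le]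
    ring_nf
  calc 2 * (1 + c * (2 * a) ^ 2) ^ (-(s/2)) ≤ 2 * ((4 * c) ^ (-(s/2)) * a ^ (-s)) := by
        rw [← h4]; linarith
  _ = 2 * (4 * c) ^ (-(s/2)) * a ^ (-s) := by ring
def iota : Idx → Fin 9 × ℕ × ℕ
  | .const => (0, 0, 0)
  | .hcos m => (1, (m:ℕ), 0)
  | .hsin m => (2, (m:ℕ), 0)
  | .vcos m => (3, (m:ℕ), 0)
  | .vsin m => (4, (m:ℕ), 0)
  | .sc m₁ m₂ => (5, (m₁:ℕ), (m₂:ℕ))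
  | .s2 m₁ m₂ => (6, (m₁:ℕ), (m₂:ℕ))
  | .c2 m₁ m₂ => (7, (m₁:ℕ), (m₂:ℕ))
  | .cs m₁ m₂ => (8, (m₁:ℕ), (m₂:ℕ))

lemma iota_inj : Function.Injective iota := by
  intro j k h
  cases j <;> cases k <;> simp_all [iota, Prod.ext_iff]

lemma lam_iota (j : Idx) :
    lam j = (2 * ((iota j).2.1 : ℝ)) ^ 2 + (2 * ((iota j).2.2 : ℝ)) ^ 2 := by
  cases j <;> simp [iota, lam]

lemma summable_pair {c s : ℝ} (hc : 0 < c) (hs : 1 < s) :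
    Summable (fun q : ℕ × ℕ =>
      4 * (1 + c * ((2 * (q.1:ℝ)) ^ 2 + (2 * (q.2:ℝ)) ^ 2)) ^ (-s)) := by
  have hh := summable_h hc hs
  have hprod := hh.mul_of_nonneg hh (fun a => by positivity) (fun a => by positivity)
  apply Summable.of_nonneg_of_le (fun q => by positivity) _ hprod
  rintro ⟨a, b⟩
  set u : ℝ := c * (2 * (a:ℝ)) ^ 2 with hu
  set v : ℝ := c * (2 * (b:ℝ)) ^ 2 with hv
  have hu0 : 0 ≤ u := by positivity
  have hv0 : 0 ≤ v := by positivity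
  have e0 : c * ((2 * (a:ℝ)) ^ 2 + (2 * (b:ℝ)) ^ 2) = u + v := by rw [hu, hv]; ring
  have e1 : (1 + (u + v)) ^ (-s) = ((1 + (u + v)) ^ 2) ^ (-(s/2)) := by
    rw [← Real.rpow_natCast (1 + (u+v)) 2, ← Real.rpow_mul (by linarith)]
    congr 1
    push_cast; ring
  have e2 : ((1 + (u + v)) ^ 2) ^ (-(s/2)) ≤ ((1 + u) * (1 + v)) ^ (-(s/2)) := by
    apply Real.rpow_le_rpow_of_nonpos (by nlinarith) (by nlinarith) (by linarith)
  have e3 : ((1 + u) * (1 + v)) ^ (-(s/2)) = (1 + u) ^ (-(s/2)) * (1 + v) ^ (-(s/2)) :=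
    Real.mul_rpow (by linarith) (by linarith)
  calc 4 * (1 + c * ((2 * (a:ℝ)) ^ 2 + (2 * (b:ℝ)) ^ 2)) ^ (-s)
      = 4 * ((1 + (u+v)) ^ (-s)) := by rw [e0]
    _ ≤ 4 * ((1 + u) ^ (-(s/2)) * (1 + v) ^ (-(s/2))) := by
        rw [e1, ← e3]; nlinarith [e2]
    _ = (2 * (1 + u) ^ (-(s/2))) * (2 * (1 + v) ^ (-(s/2))) := by ring

lemma summable_B {γ s : ℝ} (hγ : 0 < γ) (hs : 1 < s) :
    Summable (fun j : Idx => 4 * (1 + γ * π ^ 2 * lam j) ^ (-s)) := by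
  have hc : 0 < γ * π ^ 2 := by positivity
  have hpair := summable_pair hc hs
  have hbig : Summable (fun q : Fin 9 × ℕ × ℕ =>
      4 * (1 + γ * π ^ 2 * ((2 * (q.2.1:ℝ)) ^ 2 + (2 * (q.2.2:ℝ)) ^ 2)) ^ (-s)) := by
    apply (summable_prod_of_nonneg (fun q => by positivity)).2
    constructor
    · intro x; exact hpair
    · exact Summable.of_finite
  have := hbig.comp_injective iota_inj
  refine this.congr fun j => ?_
  rw [Function.comp_apply, lam_iota]
instance : IsProbabilityMeasure (volume : Measure (AddCircle (1:ℝ))) :=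
  ⟨by rw [AddCircle.measure_univ]; norm_num⟩

instance : IsProbabilityMeasure (volume : Measure T2) := by
  constructor
  rw [show (volume : Measure T2) = (volume : Measure (AddCircle (1:ℝ))).prod volume from
    Measure.volume_eq_prod _ _, ← Set.univ_prod_univ, Measure.prod_prod]
  simp

instance (p : ℝ) : IsFiniteMeasure (bern p) := by
  constructor
  rw [bern]
  simp only [Measure.add_apply, Measure.smul_apply, smul_eq_mul]
  have : (Measure.dirac (1:ℝ)) Set.univ = 1 := by simp
  have : (Measure.dirac (0:ℝ)) Set.univ = 1 := by simp
  calc (ENNReal.ofReal p) * (Measure.dirac (1:ℝ)) Set.univ +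
      (ENNReal.ofReal (1-p)) * (Measure.dirac (0:ℝ)) Set.univ
      = ENNReal.ofReal p + ENNReal.ofReal (1-p) := by simp
    _ < ⊤ := by finiteness

lemma integrable_dirac' {f : ℝ → ℝ} (hf : Measurable f) (a : ℝ) :
    Integrable f (Measure.dirac a) := by
  refine ⟨hf.aestronglyMeasurable, ?_⟩
  rw [HasFiniteIntegral, lintegral_dirac' _ hf.enorm]
  exact enorm_lt_top

lemma bern_integral {p : ℝ} (hp0 : 0 ≤ p) (hp1 : p ≤ 1) {f : ℝ → ℝ} (hf : Measurable f) :
    ∫ t, f t ∂(bern p) = p * f 1 + (1 - p) * f 0 := by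
  rw [bern, integral_add_measure
      ((integrable_dirac' hf 1).smul_measure ENNReal.ofReal_ne_top)
      ((integrable_dirac' hf 0).smul_measure ENNReal.ofReal_ne_top),
    integral_smul_measure, integral_smul_measure, integral_dirac, integral_dirac,
    ENNReal.toReal_ofReal hp0, ENNReal.toReal_ofReal (by linarith : (0:ℝ) ≤ 1 - p),
    smul_eq_mul, smul_eq_mul]
lemma key_exp {Ω : Type*} [MeasurableSpace Ω] (P : Measure Ω) [IsProbabilityMeasure P]
    {g : T2 → ℝ} (hg : Measurable g) (hg0 : ∀ x, 0 ≤ g x)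
    {p : ℝ} (hp0 : 0 ≤ p) (hp1 : p ≤ 1)
    {XX : Ω → T2} {ξξ : Ω → ℝ} (hXX : Measurable XX) (hξξ : Measurable ξξ)
    (hdist : Measure.map (fun ω => (XX ω, ξξ ω)) P =
      (volume.withDensity fun x => ENNReal.ofReal (g x)).prod (bern p))
    {F : T2 → ℝ} (hF : Measurable F) :
    ∫ ω, F (XX ω) * ξξ ω ∂P = p * ∫ x, F x * g x := by
  set T : Ω → T2 × ℝ := fun ω => (XX ω, ξξ ω) with hT'
  have hT : Measurable T := hXX.prodMk hξξ
  have hsm : AEStronglyMeasurable (fun z : T2 × ℝ => F z.1 * z.2) (Measure.map T P) :=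
    ((hF.comp measurable_fst).mul measurable_snd).aestronglyMeasurable
  have h1 : ∫ ω, F (T ω).1 * (T ω).2 ∂P = ∫ z : T2 × ℝ, F z.1 * z.2 ∂(Measure.map T P) :=
    (integral_map hT.aemeasurable hsm).symm
  have h4 : ∫ z : T2 × ℝ, F z.1 * z.2
        ∂((volume.withDensity fun x => ENNReal.ofReal (g x)).prod (bern p))
      = (∫ x, F x ∂(volume.withDensity fun x => ENNReal.ofReal (g x)))
        * ∫ t : ℝ, t ∂(bern p) := integral_prod_mul F (fun t => t)
  have h2 : ∫ t : ℝ, t ∂(bern p) = p := by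
    have := bern_integral hp0 hp1 (f := fun t : ℝ => t) measurable_id
    simpa using this
  rw [h1, hdist, h4, h2]
  have h3 : ∫ x, F x ∂(volume.withDensity fun x => ENNReal.ofReal (g x))
      = ∫ x, F x * g x := by
    have hesh : (fun x : T2 => ENNReal.ofReal (g x))
        = fun x => (((fun y : T2 => Real.toNNReal (g y)) x : NNReal) : ENNReal) := rfl
    rw [hesh, integral_withDensity_eq_integral_smul hg.real_toNNReal]
    congr 1; funext x
    rw [NNReal.smul_def, smul_eq_mul, Real.coe_toNNReal _ (hg0 x), mul_comm]
  rw [h3]; ring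
instance : Countable Idx := Function.Injective.countable iota_inj


/-- Let `μ₀^{I,N} = N⁻¹ Σᵢ 1_A(Xⁱ)ξᵢ δ_{Xⁱ}` with `Xⁱ` i.i.d. with
density `g ≤ δ₂`, `ξᵢ` i.i.d. Bernoulli(p) independent of the `Xⁱ`, `A` Borel, and
`μ₀^I(dx) = p·1_A(x)g(x)dx`, `V₀^N = √N(μ₀^{I,N} − μ₀^I) ∈ H^{−s}(T²)`.
For any `s > 1`, `sup_{N≥1} E(‖V₀^N‖²_{H^{−s}}) ≤ p·δ₂·C(s)`, where
`‖V₀^N‖²_{H^{−s}} = Σ_j ⟨V₀^N, ρ^{j,s}⟩²` (Parseval) and `C(s)` depends only on `s`. -/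
theorem initial_fluctuation_Hs_moment_bound
    {Ω : Type*} [MeasurableSpace Ω] (P : Measure Ω) [IsProbabilityMeasure P]
    (γ s : ℝ) (hγ : 0 < γ) (hs : 1 < s)
    (g : T2 → ℝ) (hg : Measurable g) (hg0 : ∀ x, 0 ≤ g x)
    (δ₂ : ℝ) (hgδ : ∀ x, g x ≤ δ₂)
    (p : ℝ) (hp0 : 0 ≤ p) (hp1 : p ≤ 1)
    (A : Set T2) (hA : MeasurableSet A)
    (X : ℕ → Ω → T2) (ξ : ℕ → Ω → ℝ)
    (hXm : ∀ i, Measurable (X i)) (hξm : ∀ i, Measurable (ξ i))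
    (hξ01 : ∀ i ω, ξ i ω = 0 ∨ ξ i ω = 1)
    (hindep : ProbabilityTheory.iIndepFun
      (fun i ω => (X i ω, ξ i ω)) P)
    (hdist : ∀ i, Measure.map (fun ω => (X i ω, ξ i ω)) P =
      (MeasureTheory.volume.withDensity fun x => ENNReal.ofReal (g x)).prod (bern p)) :
    ∃ C : ℝ, ∀ N : ℕ, 1 ≤ N →
      (∫⁻ ω, ∑' j : Idx, ENNReal.ofReal ((N : ℝ) *
          ((N : ℝ)⁻¹ * (∑ i ∈ Finset.range N,
              Set.indicator A (fun _ => (1 : ℝ)) (X i ω) * ξ i ω * rho γ s j (X i ω)) -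
            p * ∫ x in A, rho γ s j x * g x) ^ 2) ∂P) ≤
        ENNReal.ofReal (p * δ₂ * C) := by
  classical
  have hs0 : (0:ℝ) ≤ s := by linarith
  have hδ0 : 0 ≤ δ₂ := le_trans (hg0 (0, 0)) (hgδ (0, 0))
  set B : Idx → ℝ := fun j => 4 * (1 + γ * π ^ 2 * lam j) ^ (-s) with hB
  have hBsum : Summable B := summable_B hγ hs
  have hB0 : ∀ j, 0 ≤ B j := by
    intro j
    have h1 : (0:ℝ) < 1 + γ * π ^ 2 * lam j := by nlinarith [base_one_le hγ j]
    have := Real.rpow_pos_of_pos h1 (-s)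
    rw [hB]; positivity
  refine ⟨∑' j, B j, ?_⟩
  intro N hN
  have hN0 : (0:ℝ) < (N:ℝ) := by exact_mod_cast Nat.pos_of_ne_zero (by omega)
  set F : Idx → T2 → ℝ := fun j x => Set.indicator A (fun _ => (1:ℝ)) x * rho γ s j x with hF
  have hFmeas : ∀ j, Measurable (F j) := fun j =>
    (measurable_const.indicator hA).mul (meas_rho γ s j)
  set Y : Idx → ℕ → Ω → ℝ := fun j i ω => F j (X i ω) * ξ i ω with hY
  have hYmeas : ∀ j i, Measurable (Y j i) := fun j i =>
    ((hFmeas j).comp (hXm i)).mul (hξm i)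
  have hξabs : ∀ i ω, |ξ i ω| ≤ 1 := by
    intro i ω; rcases hξ01 i ω with h | h <;> simp [h]
  have hFabs : ∀ j x, |F j x| ≤ 2 := by
    intro j x
    rw [hF]
    by_cases hx : x ∈ A
    · simpa [Set.indicator_of_mem hx] using abs_rho_le hγ hs0 j x
    · simp [Set.indicator_of_notMem hx]
  have hYabs : ∀ j i ω, |Y j i ω| ≤ 2 := by
    intro j i ω
    rw [hY, abs_mul]
    calc |F j (X i ω)| * |ξ i ω| ≤ 2 * 1 :=
      mul_le_mul (hFabs j _) (hξabs i ω) (abs_nonneg _) (by norm_num)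
    _ = 2 := by norm_num
  have hYmem : ∀ j i, MemLp (Y j i) 2 P := fun j i =>
    MemLp.of_bound (hYmeas j i).aestronglyMeasurable 2
      (Filter.Eventually.of_forall fun ω => by rw [Real.norm_eq_abs]; exact hYabs j i ω)
  have hYint : ∀ j i, Integrable (Y j i) P := fun j i => (hYmem j i).integrable one_le_two
  have hEY : ∀ j i, ∫ ω, Y j i ω ∂P = p * ∫ x in A, rho γ s j x * g x := by
    intro j i
    have hk := key_exp P hg hg0 hp0 hp1 (hXm i) (hξm i) (hdist i) (hFmeas j)
    rw [hY]
    rw [hk]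
    congr 1
    rw [← integral_indicator hA]
    congr 1; funext x
    by_cases hx : x ∈ A <;>
      simp [hF, Set.indicator_of_mem, Set.indicator_of_notMem, hx]
  have hEY2 : ∀ j i, ∫ ω, (Y j i ω) ^ 2 ∂P ≤ p * (δ₂ * B j) := by
    intro j i
    have hid : (fun ω => (Y j i ω) ^ 2) = fun ω => (fun x => (F j x) ^ 2) (X i ω) * ξ i ω := by
      funext ω
      rcases hξ01 i ω with h | h <;> simp [hY, h] <;> ring
    have hk := key_exp P hg hg0 hp0 hp1 (hXm i) (hξm i) (hdist i) ((hFmeas j).pow_const 2)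
    rw [hid, hk]
    have hFsq : ∀ x, (F j x) ^ 2 ≤ B j := by
      intro x
      rw [hF]
      by_cases hx : x ∈ A
      · simpa [Set.indicator_of_mem hx] using rho_sq_le hγ hs0 j x
      · simpa [Set.indicator_of_notMem hx] using hB0 j
    have hintF : Integrable (fun x => (F j x) ^ 2 * g x) (volume : Measure T2) := by
      refine ⟨(((hFmeas j).pow_const 2).mul hg).aestronglyMeasurable,
        HasFiniteIntegral.of_bounded (C := 4 * δ₂) (ae_of_all _ fun x => ?_)⟩
      rw [Real.norm_eq_abs, abs_mul, abs_of_nonneg (hg0 x), abs_of_nonneg (sq_nonneg _)]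
      have h4 : (F j x) ^ 2 ≤ 4 := by nlinarith [hFabs j x, abs_nonneg (F j x), sq_abs (F j x)]
      nlinarith [hg0 x, hgδ x, sq_nonneg (F j x)]
    have hle : ∫ x, (F j x) ^ 2 * g x ≤ δ₂ * B j := by
      calc ∫ x, (F j x) ^ 2 * g x
          ≤ ∫ _x : T2, δ₂ * B j := by
            refine integral_mono hintF (integrable_const _) fun x => ?_
            have := hFsq x
            nlinarith [hg0 x, hgδ x, sq_nonneg (F j x), hB0 j]
        _ = δ₂ * B j := by simp
    exact mul_le_mul_of_nonneg_left hle hp0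
  -- per-j bound on the lintegral
  have main_j : ∀ j : Idx,
      (∫⁻ ω, ENNReal.ofReal ((N : ℝ) *
          ((N : ℝ)⁻¹ * (∑ i ∈ Finset.range N,
              Set.indicator A (fun _ => (1 : ℝ)) (X i ω) * ξ i ω * rho γ s j (X i ω)) -
            p * ∫ x in A, rho γ s j x * g x) ^ 2) ∂P) ≤
        ENNReal.ofReal (p * (δ₂ * B j)) := by
    intro j
    set m : ℝ := p * ∫ x in A, rho γ s j x * g x with hm
    set S : Ω → ℝ := ∑ i ∈ Finset.range N, Y j i with hS
    have hSapply : ∀ ω, S ω = ∑ i ∈ Finset.range N, Y j i ω := by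
      intro ω; rw [hS]; exact Finset.sum_apply ω _ _
    have hterm : ∀ ω, (∑ i ∈ Finset.range N,
        Set.indicator A (fun _ => (1 : ℝ)) (X i ω) * ξ i ω * rho γ s j (X i ω)) = S ω := by
      intro ω
      rw [hSapply]
      refine Finset.sum_congr rfl fun i _ => ?_
      rw [hY, hF]; ring
    have hSmem : MemLp S 2 P := memLp_finsetSum' _ fun i _ => hYmem j i
    have hES : ∫ ω, S ω ∂P = N * m := by
      have h1 : ∫ ω, S ω ∂P = ∑ i ∈ Finset.range N, ∫ ω, Y j i ω ∂P := by
        have e : ∫ ω, S ω ∂P = ∫ ω, ∑ i ∈ Finset.range N, Y j i ω ∂P := by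
          exact integral_congr_ae (Filter.Eventually.of_forall hSapply)
        rw [e, integral_finset_sum _ fun i _ => hYint j i]
      rw [h1]
      rw [Finset.sum_congr rfl fun i _ => hEY j i, Finset.sum_const, Finset.card_range,
        nsmul_eq_mul, hm]
    have hindepY : Set.Pairwise ↑(Finset.range N)
        fun i k => ProbabilityTheory.IndepFun (Y j i) (Y j k) P := by
      intro i _ k _ hik
      have hφ : Measurable fun z : T2 × ℝ => F j z.1 * z.2 :=
        ((hFmeas j).comp measurable_fst).mul measurable_snd
      exact (hindep.indepFun hik).comp hφ hφ
    have hvar_sum := ProbabilityTheory.IndepFun.variance_sum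
      (fun i (_ : i ∈ Finset.range N) => hYmem j i) hindepY
    have hvar_le : ProbabilityTheory.variance S P ≤ (N:ℝ) * (p * (δ₂ * B j)) := by
      rw [hS, hvar_sum]
      calc ∑ i ∈ Finset.range N, ProbabilityTheory.variance (Y j i) P
          ≤ ∑ _i ∈ Finset.range N, p * (δ₂ * B j) := by
            refine Finset.sum_le_sum fun i _ => ?_
            refine le_trans (ProbabilityTheory.variance_le_expectation_sq
              (hYmeas j i).aestronglyMeasurable) ?_
            exact le_trans (le_of_eq rfl) (hEY2 j i)
        _ = (N:ℝ) * (p * (δ₂ * B j)) := by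
            rw [Finset.sum_const, Finset.card_range, nsmul_eq_mul]
    have hptwise : ∀ ω, (N : ℝ) *
        ((N : ℝ)⁻¹ * (∑ i ∈ Finset.range N,
            Set.indicator A (fun _ => (1 : ℝ)) (X i ω) * ξ i ω * rho γ s j (X i ω)) - m) ^ 2
        = (N:ℝ)⁻¹ * (S ω - ∫ ω', S ω' ∂P) ^ 2 := by
      intro ω
      rw [hterm ω, hES]
      field_simp
    calc (∫⁻ ω, ENNReal.ofReal ((N : ℝ) *
          ((N : ℝ)⁻¹ * (∑ i ∈ Finset.range N,
              Set.indicator A (fun _ => (1 : ℝ)) (X i ω) * ξ i ω * rho γ s j (X i ω)) -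
            m) ^ 2) ∂P)
        = ∫⁻ ω, ENNReal.ofReal ((N:ℝ)⁻¹) * ENNReal.ofReal ((S ω - ∫ ω', S ω' ∂P) ^ 2) ∂P := by
          refine lintegral_congr fun ω => ?_
          rw [hptwise ω, ENNReal.ofReal_mul (by positivity)]
      _ = ENNReal.ofReal ((N:ℝ)⁻¹) * ∫⁻ ω, ENNReal.ofReal ((S ω - ∫ ω', S ω' ∂P) ^ 2) ∂P :=
          lintegral_const_mul' _ _ ENNReal.ofReal_ne_top
      _ = ENNReal.ofReal ((N:ℝ)⁻¹) * ProbabilityTheory.evariance S P := by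
          rw [ProbabilityTheory.evariance_eq_lintegral_ofReal]
      _ = ENNReal.ofReal ((N:ℝ)⁻¹) * ENNReal.ofReal (ProbabilityTheory.variance S P) := by
          rw [hSmem.ofReal_variance_eq]
      _ = ENNReal.ofReal ((N:ℝ)⁻¹ * ProbabilityTheory.variance S P) :=
          (ENNReal.ofReal_mul (by positivity)).symm
      _ ≤ ENNReal.ofReal (p * (δ₂ * B j)) := by
          apply ENNReal.ofReal_le_ofReal
          have h2 := mul_le_mul_of_nonneg_left hvar_le
            (inv_nonneg.mpr hN0.le)
          calc (N:ℝ)⁻¹ * ProbabilityTheory.variance S P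
              ≤ (N:ℝ)⁻¹ * ((N:ℝ) * (p * (δ₂ * B j))) := h2
            _ = p * (δ₂ * B j) := by field_simp
  -- assemble
  have hmeasj : ∀ j : Idx, Measurable fun ω => ENNReal.ofReal ((N : ℝ) *
      ((N : ℝ)⁻¹ * (∑ i ∈ Finset.range N,
          Set.indicator A (fun _ => (1 : ℝ)) (X i ω) * ξ i ω * rho γ s j (X i ω)) -
        p * ∫ x in A, rho γ s j x * g x) ^ 2) := by
    intro j
    have hsum : Measurable fun ω => ∑ i ∈ Finset.range N,
        Set.indicator A (fun _ => (1 : ℝ)) (X i ω) * ξ i ω * rho γ s j (X i ω) :=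
      Finset.measurable_sum _ fun i _ =>
        (((measurable_const.indicator hA).comp (hXm i)).mul (hξm i)).mul
          ((meas_rho γ s j).comp (hXm i))
    exact ((((hsum.const_mul _).sub measurable_const).pow_const 2).const_mul
      _).ennreal_ofReal
  calc (∫⁻ ω, ∑' j : Idx, ENNReal.ofReal ((N : ℝ) *
          ((N : ℝ)⁻¹ * (∑ i ∈ Finset.range N,
              Set.indicator A (fun _ => (1 : ℝ)) (X i ω) * ξ i ω * rho γ s j (X i ω)) -
            p * ∫ x in A, rho γ s j x * g x) ^ 2) ∂P)
      = ∑' j : Idx, ∫⁻ ω, ENNReal.ofReal ((N : ℝ) *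
          ((N : ℝ)⁻¹ * (∑ i ∈ Finset.range N,
              Set.indicator A (fun _ => (1 : ℝ)) (X i ω) * ξ i ω * rho γ s j (X i ω)) -
            p * ∫ x in A, rho γ s j x * g x) ^ 2) ∂P :=
        lintegral_tsum fun j => (hmeasj j).aemeasurable
    _ ≤ ∑' j : Idx, ENNReal.ofReal (p * (δ₂ * B j)) := ENNReal.tsum_le_tsum main_j
    _ = ∑' j : Idx, ENNReal.ofReal (p * δ₂) * ENNReal.ofReal (B j) := by
        refine tsum_congr fun j => ?_
        rw [← ENNReal.ofReal_mul (mul_nonneg hp0 hδ0), mul_assoc]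
    _ = ENNReal.ofReal (p * δ₂) * ∑' j : Idx, ENNReal.ofReal (B j) := ENNReal.tsum_mul_left
    _ = ENNReal.ofReal (p * δ₂) * ENNReal.ofReal (∑' j, B j) := by
        rw [ENNReal.ofReal_tsum_of_nonneg hB0 hBsum]
    _ = ENNReal.ofReal (p * δ₂ * ∑' j, B j) :=
        (ENNReal.ofReal_mul (mul_nonneg hp0 hδ0)).symm

end
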